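/- Let n ≥ 2, let q, k be real with 0 < q < 1 and 0 < k < 1, and set t := q^k. Let y = (y_1,…,y_n) ∈ ℂ^n have nonzero pairwise distinct coordinates with q y_i ≠ y_j for all i ≠ j, and assume q^{k+m} y_l ≠ y_s for all l ≠ s and all integers m ≥ −1. Define Δ(y) := ∏_{1 ≤ l < s ≤ n} (y_l/y_s ; q)_∞ (y_s/y_l ; q)_∞ / [ (q^k y_l/y_s ; q)_∞ (q^k y_s/y_l ; q)_∞ ]. Then for every function f : ℂ^n → ℂ, Σ_{i=1}^n [∏_{j ≠ i} (t^{−1} q y_i − y_j)/(q y_i − y_j)] · Δ(y^{(i)}) · f(y^{(i)}) = t^{1−n} · Δ(y) · Σ_{i=1}^n [∏_{j ≠ i} (t y_i − y_j)/(y_i − y_j)] · f(y^{(i)}), where y^{(i)} denotes y with y_i replaced by q y_i. -/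

import Mathlib

/-- `q^x := exp(x·log q)` for real `q > 0` and complex `x`. -/
noncomputable def qpow (q : ℝ) (x : ℂ) : ℂ := Complex.exp (x * Real.log q)

/-- The q-Pochhammer symbol `(z;q)_∞ = ∏_{i=0}^∞ (1 - z qⁱ)`. -/
noncomputable def qPochInf (q : ℝ) (z : ℂ) : ℂ := ∏' i : ℕ, (1 - z * (q : ℂ) ^ i)

/-- `Δ(y) = ∏_{l<s} (y_l/y_s;q)_∞ (y_s/y_l;q)_∞ / [(q^k y_l/y_s;q)_∞ (q^k y_s/y_l;q)_∞]`. -/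
noncomputable def qDelta (n : ℕ) (q k : ℝ) (y : Fin n → ℂ) : ℂ :=
  ∏ l : Fin n, ∏ s ∈ Finset.Ioi l,
    (qPochInf q (y l / y s) * qPochInf q (y s / y l)) /
      (qPochInf q (qpow q k * y l / y s) * qPochInf q (qpow q k * y s / y l))

open Finset

lemma hasProd_zero_of_eq_zero {ι : Type*} {f : ι → ℂ} (j : ι) (h : f j = 0) : HasProd f 0 := by
  rw [HasProd]
  apply Filter.Tendsto.congr' (f₁ := fun _ => (0:ℂ))
  · filter_upwards [Filter.eventually_ge_atTop {j}] with s hs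
    exact (Finset.prod_eq_zero (hs (Finset.mem_singleton_self j)) h).symm
  · exact tendsto_const_nhds

lemma summable_log_aux {q : ℝ} (hq0 : 0 < q) (hq1 : q < 1) (z : ℂ) :
    Summable (fun i : ℕ => Complex.log (1 - z * (q : ℂ) ^ i)) := by
  have hg : Summable (fun i : ℕ => 3/2 * (‖z‖ * q ^ i)) :=
    ((summable_geometric_of_lt_one hq0.le hq1).mul_left ‖z‖).mul_left _
  apply hg.of_norm_bounded_eventually_nat
  have h0 : Filter.Tendsto (fun i : ℕ => ‖z‖ * q ^ i) Filter.atTop (nhds 0) := by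
    simpa using (tendsto_pow_atTop_nhds_zero_of_lt_one hq0.le hq1).const_mul ‖z‖
  filter_upwards [h0.eventually_le_const (by norm_num : (0:ℝ) < 1/2)] with i hi
  have hnorm : ‖-(z * (q:ℂ)^i)‖ ≤ 1/2 := by
    rw [norm_neg, norm_mul]
    simpa [abs_of_pos hq0] using hi
  calc ‖Complex.log (1 - z * (q:ℂ)^i)‖ = ‖Complex.log (1 + -(z * (q:ℂ)^i))‖ := by ring_nf
    _ ≤ 3/2 * ‖-(z * (q:ℂ)^i)‖ := Complex.norm_log_one_add_half_le_self hnorm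
    _ ≤ 3/2 * (‖z‖ * q^i) := by
        rw [norm_neg, norm_mul]
        simp [abs_of_pos hq0]

lemma multipliable_aux {q : ℝ} (hq0 : 0 < q) (hq1 : q < 1) (z : ℂ) :
    Multipliable (fun i : ℕ => 1 - z * (q : ℂ) ^ i) := by
  by_cases h : ∃ j : ℕ, 1 - z * (q:ℂ)^j = 0
  · obtain ⟨j, hj⟩ := h
    exact ⟨0, hasProd_zero_of_eq_zero j hj⟩
  · push_neg at h
    exact Complex.multipliable_of_summable_log (summable_log_aux hq0 hq1 z)

lemma qPochInf_ne_zero {q : ℝ} (hq0 : 0 < q) (hq1 : q < 1) {z : ℂ}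
    (h : ∀ i : ℕ, 1 - z * (q:ℂ)^i ≠ 0) : qPochInf q z ≠ 0 := by
  have h2 := Complex.cexp_tsum_eq_tprod (f := fun i : ℕ => 1 - z * (q:ℂ)^i) h
    (summable_log_aux hq0 hq1 z)
  rw [qPochInf, ← h2]
  exact Complex.exp_ne_zero _

set_option maxHeartbeats 1000000 in
lemma qPochInf_rec {q : ℝ} (hq0 : 0 < q) (hq1 : q < 1) (z : ℂ) :
    qPochInf q z = (1 - z) * qPochInf q ((q:ℂ) * z) := by
  have hm : Multipliable (fun n : ℕ => 1 - z * (q:ℂ)^(n+1)) := by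
    have := multipliable_aux hq0 hq1 ((q:ℂ)*z)
    apply this.congr
    intro i
    rw [pow_succ]
    ring
  have h := tprod_eq_zero_mul' (f := fun n : ℕ => 1 - z * (q:ℂ)^n) hm
  rw [qPochInf, h]
  congr 1
  · simp
  · rw [qPochInf]
    apply tprod_congr
    intro i
    rw [pow_succ]
    ring

lemma prod_pairs_split {M : Type*} [CommMonoid M] {n : ℕ} (g : Fin n → Fin n → M)
    (hg : ∀ a b, g a b = g b a) (i : Fin n) :
    ∏ l : Fin n, ∏ s ∈ Finset.Ioi l, g l s =
      (∏ j ∈ Finset.univ.erase i, g i j) *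
        ∏ l ∈ Finset.univ.erase i, ∏ s ∈ (Finset.Ioi l).erase i, g l s := by
  rw [← Finset.mul_prod_erase Finset.univ _ (Finset.mem_univ i)]
  have hstep : ∀ l ∈ Finset.univ.erase i,
      (∏ s ∈ Finset.Ioi l, g l s) =
        (if l < i then g l i else 1) * ∏ s ∈ (Finset.Ioi l).erase i, g l s := by
    intro l _
    by_cases h : l < i
    · rw [if_pos h, Finset.mul_prod_erase _ _ (Finset.mem_Ioi.2 h)]
    · rw [if_neg h, one_mul, Finset.erase_eq_of_notMem (by simp [h])]
  rw [Finset.prod_congr rfl hstep, Finset.prod_mul_distrib, ← mul_assoc]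
  congr 1
  have h1 : (∏ l ∈ Finset.univ.erase i, if l < i then g l i else 1) =
      ∏ l ∈ Finset.Iio i, g l i := by
    rw [← Finset.prod_filter]
    congr 1
    ext x
    simp only [Finset.mem_filter, Finset.mem_erase, Finset.mem_univ, Finset.mem_Iio, and_true,
      true_and]
    exact ⟨fun h => h.2, fun h => ⟨ne_of_lt h, h⟩⟩
  rw [h1, mul_comm]
  have h2 : (∏ l ∈ Finset.Iio i, g l i) = ∏ l ∈ Finset.Iio i, g i l :=
    Finset.prod_congr rfl fun l _ => hg l i
  rw [h2, ← Finset.prod_union (by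
    rw [Finset.disjoint_left]
    intro a h h'
    exact absurd (Finset.mem_Ioi.1 h') (not_lt.2 (le_of_lt (Finset.mem_Iio.1 h))))]
  congr 1
  ext x
  simp only [Finset.mem_union, Finset.mem_Iio, Finset.mem_Ioi, Finset.mem_erase, Finset.mem_univ,
    and_true]
  constructor
  · rintro (h|h) <;> [exact ne_of_lt h; exact ne_of_gt h]
  · exact fun h => lt_or_gt_of_ne h


lemma qpow_cast {q k : ℝ} (hq0 : 0 < q) : ((q ^ k : ℝ) : ℂ) = qpow q k := by
  rw [Real.rpow_def_of_pos hq0, qpow, Complex.ofReal_exp]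
  push_cast
  ring_nf

lemma qpow_shift {q : ℝ} (hq0 : 0 < q) (k : ℝ) (m : ℤ) :
    qpow q ((k : ℂ) + m) = qpow q k * (q : ℂ) ^ m := by
  rw [qpow, qpow, add_mul, Complex.exp_add]
  congr 1
  rw [Complex.exp_int_mul]
  congr 1
  rw [← Complex.ofReal_exp, Real.exp_log hq0]

noncomputable def Ffun (q k : ℝ) (a b : ℂ) : ℂ :=
  (qPochInf q (a / b) * qPochInf q (b / a)) /
    (qPochInf q (qpow q k * a / b) * qPochInf q (qpow q k * b / a))

lemma Ffun_symm (q k : ℝ) (a b : ℂ) : Ffun q k a b = Ffun q k b a := by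
  rw [Ffun, Ffun, mul_comm (qPochInf q (a / b)), mul_comm (qPochInf q (qpow q k * a / b))]

lemma qDelta_eq_Ffun (n : ℕ) (q k : ℝ) (y : Fin n → ℂ) :
    qDelta n q k y = ∏ l : Fin n, ∏ s ∈ Finset.Ioi l, Ffun q k (y l) (y s) := rfl

lemma pochratio_ne_zero {q k : ℝ} (hq0 : 0 < q) (hq1 : q < 1) {a b : ℂ} (hb : b ≠ 0)
    (h : ∀ m : ℤ, -1 ≤ m → qpow q k * (q:ℂ)^m * a ≠ b) (c : ℂ) (e : ℤ) (he : -1 ≤ e)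
    (hc : c ≠ 0) (hcb : c = (q:ℂ)^(-e) * b) :
    qPochInf q (qpow q k * a / c) ≠ 0 := by
  apply qPochInf_ne_zero hq0 hq1
  intro i
  rw [sub_ne_zero]
  intro hcontra
  apply h ((i : ℤ) + e) (by omega)
  have hq : (q:ℂ) ≠ 0 := Complex.ofReal_ne_zero.2 (ne_of_gt hq0)
  rw [zpow_add₀ hq, zpow_natCast]
  field_simp [hcb] at hcontra ⊢
  rw [← hcontra, hcb, mul_right_comm, ← zpow_add₀ hq, neg_add_cancel, zpow_zero]
  ring

set_option maxHeartbeats 2000000 in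
lemma pair_identity {q k : ℝ} (hq0 : 0 < q) (hq1 : q < 1) {a b : ℂ} (ha : a ≠ 0) (hb : b ≠ 0)
    (hab : ∀ m : ℤ, -1 ≤ m → qpow q k * (q:ℂ)^m * a ≠ b)
    (hba : ∀ m : ℤ, -1 ≤ m → qpow q k * (q:ℂ)^m * b ≠ a) :
    Ffun q k ((q:ℂ) * a) b * ((a - b) * ((q:ℂ) * a - qpow q k * b)) =
      Ffun q k a b * (((q:ℂ) * a - b) * (qpow q k * a - b)) := by
  have hq : (q:ℂ) ≠ 0 := Complex.ofReal_ne_zero.2 (ne_of_gt hq0)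
  set T := qpow q k with hT
  -- nonzero denominators
  have hC : qPochInf q (T * ((q:ℂ) * a) / b) ≠ 0 := by
    have := pochratio_ne_zero hq0 hq1 hb hab ((q:ℂ)⁻¹ * b) 1 (by norm_num)
      (by simp [hq, hb]) (by rw [zpow_neg_one])
    convert this using 2
    field_simp
    ring
  have hTab : qPochInf q (T * a / b) ≠ 0 :=
    pochratio_ne_zero hq0 hq1 hb hab b 0 (by norm_num) hb (by rw [neg_zero, zpow_zero, one_mul])
  have hD : qPochInf q (T * b / a) ≠ 0 :=
    pochratio_ne_zero hq0 hq1 ha hba a 0 (by norm_num) ha (by rw [neg_zero, zpow_zero, one_mul])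
  have hTbqa : qPochInf q (T * b / ((q:ℂ) * a)) ≠ 0 :=
    pochratio_ne_zero hq0 hq1 ha hba ((q:ℂ) * a) (-1) (le_refl _)
      (mul_ne_zero hq ha) (by rw [neg_neg, zpow_one])
  -- one-step recurrences
  have r1 : qPochInf q (a / b) = (1 - a / b) * qPochInf q ((q:ℂ) * a / b) := by
    rw [qPochInf_rec hq0 hq1 (a / b), mul_div_assoc]
  have r2 : qPochInf q (b / ((q:ℂ) * a)) = (1 - b / ((q:ℂ) * a)) * qPochInf q (b / a) := by
    rw [qPochInf_rec hq0 hq1 (b / ((q:ℂ) * a))]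
    congr 2
    field_simp
  have r3 : qPochInf q (T * a / b) = (1 - T * a / b) * qPochInf q (T * ((q:ℂ) * a) / b) := by
    rw [qPochInf_rec hq0 hq1 (T * a / b)]
    congr 2
    field_simp
  have r4 : qPochInf q (T * b / ((q:ℂ) * a)) =
      (1 - T * b / ((q:ℂ) * a)) * qPochInf q (T * b / a) := by
    rw [qPochInf_rec hq0 hq1 (T * b / ((q:ℂ) * a))]
    congr 2
    field_simp
  have h0 : (1 - T * a / b) ≠ 0 := by
    rw [sub_ne_zero]
    intro hcontra
    exact hab 0 (by norm_num) (by rw [zpow_zero, mul_one]; field_simp at hcontra; rw [hcontra])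
  have hm1 : (1 - T * b / ((q:ℂ) * a)) ≠ 0 := by
    rw [sub_ne_zero]
    intro hcontra
    apply hba (-1) (le_refl _)
    rw [zpow_neg_one]
    field_simp at hcontra ⊢
    linear_combination -hcontra
  rw [Ffun, Ffun, r1, r2, ← hT, r3, r4, div_mul_eq_mul_div, div_mul_eq_mul_div,
    div_eq_div_iff (mul_ne_zero hC (mul_ne_zero hm1 hD)) (mul_ne_zero (mul_ne_zero h0 hC) hD)]
  field_simp
  ring

lemma qDelta_update {n : ℕ} {q k : ℝ} (hq0 : 0 < q) (hq1 : q < 1) (y : Fin n → ℂ)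
    (hy0 : ∀ i, y i ≠ 0) (i : Fin n)
    (hnd' : ∀ l s : Fin n, l ≠ s → ∀ m : ℤ, -1 ≤ m → qpow q k * (q:ℂ)^m * y l ≠ y s) :
    qDelta n q k (Function.update y i ((q:ℂ) * y i)) *
        ∏ j ∈ Finset.univ.erase i, ((y i - y j) * ((q:ℂ) * y i - qpow q k * y j)) =
      qDelta n q k y *
        ∏ j ∈ Finset.univ.erase i, (((q:ℂ) * y i - y j) * (qpow q k * y i - y j)) := by
  set y' := Function.update y i ((q:ℂ) * y i) with hy'
  rw [qDelta_eq_Ffun, qDelta_eq_Ffun,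
    prod_pairs_split (fun l s => Ffun q k (y' l) (y' s)) (fun a b => Ffun_symm q k _ _) i,
    prod_pairs_split (fun l s => Ffun q k (y l) (y s)) (fun a b => Ffun_symm q k _ _) i]
  have hC : (∏ l ∈ Finset.univ.erase i, ∏ s ∈ (Finset.Ioi l).erase i,
      Ffun q k (y' l) (y' s)) =
      ∏ l ∈ Finset.univ.erase i, ∏ s ∈ (Finset.Ioi l).erase i, Ffun q k (y l) (y s) := by
    apply Finset.prod_congr rfl
    intro l hl
    apply Finset.prod_congr rfl
    intro s hs
    rw [hy', Function.update_of_ne (Finset.mem_erase.1 hl).1,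
      Function.update_of_ne (Finset.mem_erase.1 hs).1]
  rw [hC]
  have hP : (∏ j ∈ Finset.univ.erase i, Ffun q k (y' i) (y' j)) =
      ∏ j ∈ Finset.univ.erase i, Ffun q k ((q:ℂ) * y i) (y j) := by
    apply Finset.prod_congr rfl
    intro j hj
    rw [hy', Function.update_self, Function.update_of_ne (Finset.mem_erase.1 hj).1]
  rw [hP]
  have key : (∏ j ∈ Finset.univ.erase i, Ffun q k ((q:ℂ) * y i) (y j)) *
      (∏ j ∈ Finset.univ.erase i, ((y i - y j) * ((q:ℂ) * y i - qpow q k * y j))) =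
      (∏ j ∈ Finset.univ.erase i, Ffun q k (y i) (y j)) *
        ∏ j ∈ Finset.univ.erase i, (((q:ℂ) * y i - y j) * (qpow q k * y i - y j)) := by
    rw [← Finset.prod_mul_distrib, ← Finset.prod_mul_distrib]
    apply Finset.prod_congr rfl
    intro j hj
    have hji : j ≠ i := (Finset.mem_erase.1 hj).1
    exact pair_identity hq0 hq1 (hy0 i) (hy0 j)
      (fun m hm => hnd' i j (Ne.symm hji) m hm) (fun m hm => hnd' j i hji m hm)
  linear_combination (∏ l ∈ Finset.univ.erase i, ∏ s ∈ (Finset.Ioi l).erase i,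
    Ffun q k (y l) (y s)) * key


/-- The gauge identity
`[Σ_i T_{q,y_i} ∏_{j≠i} (t⁻¹y_i-y_j)/(y_i-y_j)] ∘ Δ
  = Δ ∘ t^{1-n} [Σ_i ∏_{j≠i} (t y_i-y_j)/(y_i-y_j) T_{q,y_i}]`. -/
theorem stmt9 (n : ℕ) (hn : 2 ≤ n) (q k t : ℝ) (hq0 : 0 < q) (hq1 : q < 1)
    (hk0 : 0 < k) (hk1 : k < 1) (ht : t = q ^ k)
    (y : Fin n → ℂ) (hy0 : ∀ i, y i ≠ 0) (hyd : ∀ i j, i ≠ j → y i ≠ y j)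
    (hyq : ∀ i j, i ≠ j → (q : ℂ) * y i ≠ y j)
    (hnd : ∀ l s, l ≠ s → ∀ m : ℤ, -1 ≤ m → qpow q ((k : ℂ) + m) * y l ≠ y s)
    (f : (Fin n → ℂ) → ℂ) :
    ∑ i : Fin n,
        (∏ j ∈ Finset.univ.erase i,
          ((t : ℂ)⁻¹ * ((q : ℂ) * y i) - y j) / ((q : ℂ) * y i - y j)) *
          qDelta n q k (Function.update y i ((q : ℂ) * y i)) *
          f (Function.update y i ((q : ℂ) * y i)) =
      ((t : ℂ) ^ (n - 1))⁻¹ * qDelta n q k y *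
        ∑ i : Fin n,
          (∏ j ∈ Finset.univ.erase i, ((t : ℂ) * y i - y j) / (y i - y j)) *
            f (Function.update y i ((q : ℂ) * y i)) := by
  have hq : (q:ℂ) ≠ 0 := Complex.ofReal_ne_zero.2 (ne_of_gt hq0)
  have htpos : 0 < t := ht ▸ Real.rpow_pos_of_pos hq0 k
  have ht0 : (t:ℂ) ≠ 0 := Complex.ofReal_ne_zero.2 (ne_of_gt htpos)
  have htC : (t:ℂ) = qpow q k := by rw [ht, qpow_cast hq0]
  have hnd' : ∀ l s : Fin n, l ≠ s → ∀ m : ℤ, -1 ≤ m → qpow q k * (q:ℂ)^m * y l ≠ y s := by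
    intro l s hls m hm
    rw [← qpow_shift hq0 k m]
    exact hnd l s hls m hm
  rw [Finset.mul_sum]
  apply Finset.sum_congr rfl
  intro i _
  have hcard : (Finset.univ.erase i).card = n - 1 := by
    rw [Finset.card_erase_of_mem (Finset.mem_univ i), Finset.card_univ, Fintype.card_fin]
  -- nonzero denominators
  have h_yy : ∀ j ∈ Finset.univ.erase i, y i - y j ≠ 0 := fun j hj =>
    sub_ne_zero.2 (hyd i j (Ne.symm (Finset.mem_erase.1 hj).1))
  have h_qyy : ∀ j ∈ Finset.univ.erase i, (q:ℂ) * y i - y j ≠ 0 := fun j hj =>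
    sub_ne_zero.2 (hyq i j (Ne.symm (Finset.mem_erase.1 hj).1))
  have h_qyt : ∀ j ∈ Finset.univ.erase i, (q:ℂ) * y i - (t:ℂ) * y j ≠ 0 := by
    intro j hj
    rw [sub_ne_zero]
    intro hcontra
    apply hnd' j i (Finset.mem_erase.1 hj).1 (-1) (le_refl _)
    rw [htC] at hcontra
    rw [zpow_neg_one]
    field_simp
    linear_combination -hcontra
  have hW1 : (∏ j ∈ Finset.univ.erase i, ((y i - y j) * ((q:ℂ) * y i - (t:ℂ) * y j))) ≠ 0 :=
    Finset.prod_ne_zero_iff.2 fun j hj => mul_ne_zero (h_yy j hj) (h_qyt j hj)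
  have h1 : qDelta n q k (Function.update y i ((q:ℂ) * y i)) *
      ∏ j ∈ Finset.univ.erase i, ((y i - y j) * ((q:ℂ) * y i - (t:ℂ) * y j)) =
      qDelta n q k y *
        ∏ j ∈ Finset.univ.erase i, (((q:ℂ) * y i - y j) * ((t:ℂ) * y i - y j)) := by
    rw [htC]
    exact qDelta_update hq0 hq1 y hy0 i hnd'
  have star : (∏ j ∈ Finset.univ.erase i,
        ((t:ℂ)⁻¹ * ((q:ℂ) * y i) - y j) / ((q:ℂ) * y i - y j)) *
      (∏ j ∈ Finset.univ.erase i, (((q:ℂ) * y i - y j) * ((t:ℂ) * y i - y j))) =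
      ((t:ℂ) ^ (n - 1))⁻¹ *
        ((∏ j ∈ Finset.univ.erase i, ((t:ℂ) * y i - y j) / (y i - y j)) *
          ∏ j ∈ Finset.univ.erase i, ((y i - y j) * ((q:ℂ) * y i - (t:ℂ) * y j))) := by
    rw [← inv_pow, ← hcard, ← Finset.prod_const ((t:ℂ)⁻¹), ← Finset.prod_mul_distrib,
      ← Finset.prod_mul_distrib, ← Finset.prod_mul_distrib]
    apply Finset.prod_congr rfl
    intro j hj
    field_simp [h_yy j hj, h_qyy j hj]
  have scalar : (∏ j ∈ Finset.univ.erase i,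
        ((t:ℂ)⁻¹ * ((q:ℂ) * y i) - y j) / ((q:ℂ) * y i - y j)) *
      qDelta n q k (Function.update y i ((q:ℂ) * y i)) =
      ((t:ℂ) ^ (n - 1))⁻¹ * qDelta n q k y *
        ∏ j ∈ Finset.univ.erase i, ((t:ℂ) * y i - y j) / (y i - y j) := by
    apply mul_right_cancel₀ hW1
    linear_combination (∏ j ∈ Finset.univ.erase i,
      ((t:ℂ)⁻¹ * ((q:ℂ) * y i) - y j) / ((q:ℂ) * y i - y j)) * h1 + qDelta n q k y * star
  linear_combination f (Function.update y i ((q:ℂ) * y i)) * scalar
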